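/- Let n ≥ 2, let f : 2^{[n]} → ℝ be a submodular set function with f(∅) = 0, and let γ be a fractional partition with respect to a family 𝓕 of subsets of [n] satisfying the standing assumptions. Define σ = min over ordered pairs of distinct i, j ∈ [n] of ∑_{S ∈ 𝓕 : i ∈ S, j ∉ S} γ(S). Then σ > 0, and for any ε ≥ 0, if Gap_U(f, 𝓕, γ) = ∑_{S ∈ 𝓕} γ(S) f(S) − f([n]) ≤ ε, then f({i}) + f([n] ∖ {i}) − f([n]) ≤ ε/σ for every i ∈ [n]. -/
import Mathlib


open Finset
open scoped Classical BigOperators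

theorem stmt_0 (n : ℕ) (hn : 2 ≤ n) (f : Finset (Fin n) → ℝ)
    (hf0 : f ∅ = 0)
    (hsubmod : ∀ A B : Finset (Fin n), f (A ∪ B) + f (A ∩ B) ≤ f A + f B)
    (ι : Type) [Fintype ι] (S : ι → Finset (Fin n)) (γ : ι → ℝ)
    (hproper : ∀ k, S k ≠ Finset.univ)
    (hpos : ∀ k, 0 < γ k)
    (hsep : ∀ i j : Fin n, i ≠ j → ¬ (∀ k, i ∈ S k ↔ j ∈ S k))
    (hfrac : ∀ i : Fin n, ∑ k ∈ Finset.univ.filter (fun k => i ∈ S k), γ k = 1)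
    (σ : ℝ)
    (hσ : σ = sInf {x : ℝ | ∃ i j : Fin n, i ≠ j ∧
      x = ∑ k ∈ Finset.univ.filter (fun k => i ∈ S k ∧ j ∉ S k), γ k}) :
    0 < σ ∧ ∀ ε : ℝ, 0 ≤ ε →
      (∑ k : ι, γ k * f (S k)) - f Finset.univ ≤ ε →
      ∀ i : Fin n, f {i} + f (Finset.univ \ {i}) - f Finset.univ ≤ ε / σ := by
  set 𝒮 : Set ℝ := {x : ℝ | ∃ i j : Fin n, i ≠ j ∧
      x = ∑ k ∈ Finset.univ.filter (fun k => i ∈ S k ∧ j ∉ S k), γ k} with h𝒮def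
  have hfin : 𝒮.Finite := by
    apply Set.Finite.subset (Set.finite_range
      (fun p : Fin n × Fin n =>
        ∑ k ∈ Finset.univ.filter (fun k => p.1 ∈ S k ∧ p.2 ∉ S k), γ k))
    rintro x ⟨i, j, hij, rfl⟩
    exact ⟨(i, j), rfl⟩
  have hsplit : ∀ i j : Fin n,
      (∑ k ∈ Finset.univ.filter (fun k => i ∈ S k ∧ j ∈ S k), γ k)
      + (∑ k ∈ Finset.univ.filter (fun k => i ∈ S k ∧ j ∉ S k), γ k) = 1 := by
    intro i j
    have h := Finset.sum_filter_add_sum_filter_not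
      (Finset.univ.filter (fun k => i ∈ S k)) (fun k => j ∈ S k) γ
    rw [Finset.filter_filter, Finset.filter_filter, hfrac i] at h
    exact h
  have hsymm : ∀ i j : Fin n,
      (∑ k ∈ Finset.univ.filter (fun k => i ∈ S k ∧ j ∉ S k), γ k)
      = ∑ k ∈ Finset.univ.filter (fun k => j ∈ S k ∧ i ∉ S k), γ k := by
    intro i j
    have h1 := hsplit i j
    have h2 := hsplit j i
    have heq : (Finset.univ.filter (fun k => i ∈ S k ∧ j ∈ S k))
        = Finset.univ.filter (fun k => j ∈ S k ∧ i ∈ S k) := by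
      ext k; simp [and_comm]
    rw [heq] at h1
    linarith
  have hmem_pos : ∀ x ∈ 𝒮, 0 < x := by
    rintro x ⟨i, j, hij, rfl⟩
    obtain ⟨k, hk⟩ : ∃ k, ¬ (i ∈ S k ↔ j ∈ S k) := by
      by_contra hc
      push_neg at hc
      exact hsep i j hij (fun k => hc k)
    by_cases hik : i ∈ S k
    · have hjk : j ∉ S k := fun h => hk ⟨fun _ => h, fun _ => hik⟩
      have hle : γ k ≤ ∑ m ∈ Finset.univ.filter (fun k => i ∈ S k ∧ j ∉ S k), γ m :=
        Finset.single_le_sum (fun m _ => (hpos m).le) (by simp [hik, hjk])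
      linarith [hpos k]
    · have hjk : j ∈ S k := by
        by_contra hjk
        exact hk ⟨fun h => absurd h hik, fun h => absurd h hjk⟩
      rw [hsymm i j]
      have hle : γ k ≤ ∑ m ∈ Finset.univ.filter (fun k => j ∈ S k ∧ i ∉ S k), γ m :=
        Finset.single_le_sum (fun m _ => (hpos m).le) (by simp [hik, hjk])
      linarith [hpos k]
  have hne : 𝒮.Nonempty := by
    refine ⟨_, ⟨0, by omega⟩, ⟨1, by omega⟩, ?_, rfl⟩
    intro h
    have : (0 : ℕ) = 1 := congrArg Fin.val h
    exact absurd this (by norm_num)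
  have hσmem : σ ∈ 𝒮 := by rw [hσ]; exact hne.csInf_mem hfin
  have hσpos : 0 < σ := hmem_pos σ hσmem
  have hσle : ∀ i j : Fin n, i ≠ j →
      σ ≤ ∑ k ∈ Finset.univ.filter (fun k => i ∈ S k ∧ j ∉ S k), γ k := by
    intro i j hij
    rw [hσ]
    exact csInf_le hfin.bddBelow ⟨i, j, hij, rfl⟩
  refine ⟨hσpos, ?_⟩
  intro ε hε hgap i
  have key : ∀ m : ℕ, ∀ V : Finset (Fin n), V.card ≤ m → i ∈ V →
      f V + σ * (f {i} + f (V \ {i}) - f V) ≤ ∑ k : ι, γ k * f (S k ∩ V) := by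
    intro m
    induction m with
    | zero =>
      intro V hcard hiV
      have := Finset.card_pos.mpr ⟨i, hiV⟩
      omega
    | succ m ih =>
      intro V hcard hiV
      by_cases hV : V = {i}
      · subst hV
        have hLHS : f {i} + σ * (f {i} + f (({i} : Finset (Fin n)) \ {i}) - f {i})
            = f {i} := by
          rw [Finset.sdiff_self, hf0]; ring
        rw [hLHS]
        have hsum : ∑ k : ι, γ k * f (S k ∩ {i})
            = ∑ k : ι, (if i ∈ S k then γ k * f {i} else 0) := by
          apply Finset.sum_congr rfl
          intro k _
          by_cases hik : i ∈ S k
          · have hSk : S k ∩ {i} = {i} := by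
              ext x; simp only [Finset.mem_inter, Finset.mem_singleton]
              constructor
              · rintro ⟨_, rfl⟩; rfl
              · rintro rfl; exact ⟨hik, rfl⟩
            rw [hSk, if_pos hik]
          · have hSk : S k ∩ {i} = ∅ := by
              ext x; simp only [Finset.mem_inter, Finset.mem_singleton,
                Finset.notMem_empty, iff_false, not_and]
              intro hx hxi; exact hik (hxi ▸ hx)
            rw [hSk, hf0, if_neg hik, mul_zero]
        rw [hsum, ← Finset.sum_filter, ← Finset.sum_mul, hfrac i, one_mul]
      · -- inductive step: pick j ∈ V with j ≠ i
        obtain ⟨j, hjV, hji⟩ : ∃ j ∈ V, j ≠ i := by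
          by_contra hc
          push_neg at hc
          exact hV (Finset.eq_singleton_iff_unique_mem.mpr ⟨hiV, fun x hx => hc x hx⟩)
        have hij : i ≠ j := fun h => hji h.symm
        set W : Finset (Fin n) := V \ {j} with hWdef
        have hiW : i ∈ W := Finset.mem_sdiff.mpr ⟨hiV, by simp [hij]⟩
        have hcardW : W.card ≤ m := by
          have h1 : W.card < V.card := by
            apply Finset.card_lt_card
            constructor
            · exact Finset.sdiff_subset
            · intro hsub
              have := hsub hjV
              simp [hWdef] at this
          omega
        have hIH := ih W hcardW hiW
        -- set identities
        have hWi : W \ {i} = (V \ {i}) \ {j} := by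
          ext x
          simp only [hWdef, Finset.mem_sdiff, Finset.mem_singleton]
          tauto
        -- submodularity : b ≥ a
        have hba : f V - f W ≤ f (V \ {i}) - f (W \ {i}) := by
          have hu : (V \ {i}) ∪ W = V := by
            ext x
            simp only [hWdef, Finset.mem_union, Finset.mem_sdiff, Finset.mem_singleton]
            constructor
            · rintro (⟨h, _⟩ | ⟨h, _⟩) <;> exact h
            · intro hx
              rcases eq_or_ne x i with rfl | hxi
              · exact Or.inr ⟨hx, hij⟩
              · exact Or.inl ⟨hx, hxi⟩
          have hi : (V \ {i}) ∩ W = W \ {i} := by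
            ext x
            simp only [hWdef, Finset.mem_inter, Finset.mem_sdiff, Finset.mem_singleton]
            tauto
          have := hsubmod (V \ {i}) W
          rw [hu, hi] at this
          linarith
        -- per-index inequality
        have hper : ∀ k : ι, f (S k ∩ W)
            + (if j ∈ S k then (if i ∈ S k then f V - f W
                else f (V \ {i}) - f (W \ {i})) else 0)
            ≤ f (S k ∩ V) := by
          intro k
          by_cases hjk : j ∈ S k
          · by_cases hik : i ∈ S k
            · rw [if_pos hjk, if_pos hik]
              have hu : (S k ∩ V) ∪ W = V := by
                ext x
                simp only [hWdef, Finset.mem_union, Finset.mem_inter, Finset.mem_sdiff,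
                  Finset.mem_singleton]
                constructor
                · rintro (⟨_, h⟩ | ⟨h, _⟩) <;> exact h
                · intro hx
                  rcases eq_or_ne x j with rfl | hxj
                  · exact Or.inl ⟨hjk, hx⟩
                  · exact Or.inr ⟨hx, hxj⟩
              have hi2 : (S k ∩ V) ∩ W = S k ∩ W := by
                ext x
                simp only [hWdef, Finset.mem_inter, Finset.mem_sdiff, Finset.mem_singleton]
                tauto
              have := hsubmod (S k ∩ V) W
              rw [hu, hi2] at this
              linarith
            · rw [if_pos hjk, if_neg hik]
              have hu : (S k ∩ V) ∪ ((V \ {i}) \ {j}) = V \ {i} := by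
                ext x
                simp only [Finset.mem_union, Finset.mem_inter, Finset.mem_sdiff,
                  Finset.mem_singleton]
                constructor
                · rintro (⟨hxS, hxV⟩ | ⟨⟨hxV, hxi⟩, _⟩)
                  · refine ⟨hxV, ?_⟩
                    rintro rfl; exact hik hxS
                  · exact ⟨hxV, hxi⟩
                · rintro ⟨hxV, hxi⟩
                  rcases eq_or_ne x j with rfl | hxj
                  · exact Or.inl ⟨hjk, hxV⟩
                  · exact Or.inr ⟨⟨hxV, hxi⟩, hxj⟩
              have hi2 : (S k ∩ V) ∩ ((V \ {i}) \ {j}) = S k ∩ W := by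
                ext x
                simp only [hWdef, Finset.mem_inter, Finset.mem_sdiff, Finset.mem_singleton]
                constructor
                · rintro ⟨⟨hxS, hxV⟩, ⟨_, _⟩, hxj⟩
                  exact ⟨hxS, hxV, hxj⟩
                · rintro ⟨hxS, hxV, hxj⟩
                  refine ⟨⟨hxS, hxV⟩, ⟨hxV, ?_⟩, hxj⟩
                  rintro rfl; exact hik hxS
              have := hsubmod (S k ∩ V) ((V \ {i}) \ {j})
              rw [hu, hi2, ← hWi] at this
              linarith
          · rw [if_neg hjk, add_zero]
            have hSV : S k ∩ V = S k ∩ W := by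
              ext x
              simp only [hWdef, Finset.mem_inter, Finset.mem_sdiff, Finset.mem_singleton]
              constructor
              · rintro ⟨hxS, hxV⟩
                refine ⟨hxS, hxV, ?_⟩
                rintro rfl; exact hjk hxS
              · rintro ⟨hxS, hxV, _⟩
                exact ⟨hxS, hxV⟩
            rw [hSV]
        -- sum the per-index inequalities
        have hsum_le : (∑ k : ι, γ k * f (S k ∩ W))
            + (∑ k : ι, γ k * (if j ∈ S k then (if i ∈ S k then f V - f W
                else f (V \ {i}) - f (W \ {i})) else 0))
            ≤ ∑ k : ι, γ k * f (S k ∩ V) := by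
          rw [← Finset.sum_add_distrib]
          apply Finset.sum_le_sum
          intro k _
          rw [← mul_add]
          exact mul_le_mul_of_nonneg_left (hper k) (hpos k).le
        -- compute the middle sum
        have hmid : (∑ k : ι, γ k * (if j ∈ S k then (if i ∈ S k then f V - f W
                else f (V \ {i}) - f (W \ {i})) else 0))
            = (∑ k ∈ Finset.univ.filter (fun k => j ∈ S k ∧ i ∈ S k), γ k) * (f V - f W)
            + (∑ k ∈ Finset.univ.filter (fun k => j ∈ S k ∧ i ∉ S k), γ k)
              * (f (V \ {i}) - f (W \ {i})) := by
          calc (∑ k : ι, γ k * (if j ∈ S k then (if i ∈ S k then f V - f W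
                else f (V \ {i}) - f (W \ {i})) else 0))
              = ∑ k : ι, ((if j ∈ S k ∧ i ∈ S k then γ k * (f V - f W) else 0)
                + (if j ∈ S k ∧ i ∉ S k then γ k * (f (V \ {i}) - f (W \ {i})) else 0)) := by
                apply Finset.sum_congr rfl
                intro k _
                by_cases hjk : j ∈ S k <;> by_cases hik : i ∈ S k <;> simp [hjk, hik]
            _ = (∑ k ∈ Finset.univ.filter (fun k => j ∈ S k ∧ i ∈ S k),
                  γ k * (f V - f W))
                + ∑ k ∈ Finset.univ.filter (fun k => j ∈ S k ∧ i ∉ S k),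
                  γ k * (f (V \ {i}) - f (W \ {i})) := by
                rw [Finset.sum_add_distrib, Finset.sum_filter, Finset.sum_filter]
            _ = _ := by rw [← Finset.sum_mul, ← Finset.sum_mul]
        set w : ℝ := ∑ k ∈ Finset.univ.filter (fun k => j ∈ S k ∧ i ∉ S k), γ k with hwdef
        have hw1 : (∑ k ∈ Finset.univ.filter (fun k => j ∈ S k ∧ i ∈ S k), γ k) = 1 - w := by
          have := hsplit j i
          linarith
        have hwσ : σ ≤ w := hσle j i hji
        rw [hw1] at hmid
        have hprod : 0 ≤ (w - σ) * ((f (V \ {i}) - f (W \ {i})) - (f V - f W)) :=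
          mul_nonneg (by linarith) (by linarith)
        nlinarith [hsum_le, hmid, hIH, hprod]
  -- conclude
  have hkey := key n Finset.univ (by simp) (Finset.mem_univ i)
  have huniv : ∑ k : ι, γ k * f (S k ∩ Finset.univ) = ∑ k : ι, γ k * f (S k) := by
    simp [Finset.inter_univ]
  rw [huniv] at hkey
  rw [le_div_iff₀ hσpos]
  nlinarith [hkey, hgap]
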